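/- (Weierstrass function is nowhere p-differentiable) Let α > 1, p(t,h) = t + h^α (with h^α interpreted for h > 0 in the one-sided limit), let a be a positive odd integer, 0 < b < 1, and suppose a^{1/α}·b > 1 + (3/2)π. Then the Weierstrass function f(x) = Σ_{n=0}^∞ b^n cos(aⁿπx) satisfies: for every x ∈ ℝ there is a sequence h_m → 0⁺ such that |(f(x + h_m^α) − f(x))/h_m| → ∞; in particular, the p-derivative lim_{h→0} (f(x + h^α) − f(x))/h exists at no point x ∈ ℝ. -/

import Mathlib

open Filter Set Topology Real

private lemma cos_lip (u v : ℝ) : |Real.cos u - Real.cos v| ≤ |u - v| := by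
  rw [Real.cos_sub_cos]
  have h1 : |Real.sin ((u + v) / 2)| ≤ 1 := Real.abs_sin_le_one _
  have h2 : |Real.sin ((u - v) / 2)| ≤ |(u - v) / 2| := Real.abs_sin_le_abs
  calc |-2 * Real.sin ((u + v) / 2) * Real.sin ((u - v) / 2)|
      = 2 * |Real.sin ((u + v) / 2)| * |Real.sin ((u - v) / 2)| := by
        rw [abs_mul, abs_mul]; norm_num
    _ ≤ 2 * 1 * |(u - v) / 2| := by
        apply mul_le_mul _ h2 (abs_nonneg _) (by positivity)
        nlinarith [abs_nonneg (Real.sin ((u+v)/2))]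
    _ = |u - v| := by rw [abs_div]; push_cast; ring_nf

/-- cos(π * n) for integer n, moved by odd multiple -/
private lemma cos_pi_odd_mul (c : ℤ) (hc : Odd c) (N : ℤ) :
    Real.cos (Real.pi * (c * N)) = Real.cos (Real.pi * N) := by
  obtain ⟨j, hj⟩ : ∃ j : ℤ, c * N = N + j * 2 := by
    obtain ⟨t, ht⟩ := hc
    exact ⟨t * N, by rw [ht]; ring⟩
  have hj' : (c : ℝ) * N = N + j * 2 := by exact_mod_cast congrArg (Int.cast : ℤ → ℝ) hj
  rw [hj']
  have : Real.pi * ((N : ℝ) + j * 2) = Real.pi * N + j * (2 * Real.pi) := by ring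
  rw [this, Real.cos_add_int_mul_two_pi]

private lemma sin_pi_int (N : ℤ) : Real.sin (Real.pi * N) = 0 := by
  rw [mul_comm]; exact Real.sin_int_mul_pi N

private lemma abs_cos_pi_int (N : ℤ) : |Real.cos (Real.pi * N)| = 1 := by
  have h := Real.sin_sq_add_cos_sq (Real.pi * N)
  rw [sin_pi_int] at h
  nlinarith [abs_nonneg (Real.cos (Real.pi * N)), sq_abs (Real.cos (Real.pi * N))]

private lemma summable_weier (b : ℝ) (hb0 : 0 ≤ b) (hb1 : b < 1) (g : ℕ → ℝ)
    (hg : ∀ n, |g n| ≤ 1) : Summable (fun n => b ^ n * g n) := by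
  apply Summable.of_norm_bounded (g := fun n => b ^ n) (summable_geometric_of_lt_one hb0 hb1)
  intro n
  rw [Real.norm_eq_abs, abs_mul, abs_pow, abs_of_nonneg hb0]
  calc b ^ n * |g n| ≤ b ^ n * 1 := by
        exact mul_le_mul_of_nonneg_left (hg n) (by positivity)
    _ = b ^ n := mul_one _

set_option maxHeartbeats 1000000 in
/-- Key estimate: at every scale m there is an increment k of size ≈ a^{-m}
with |f(x+k) - f(x)| ≥ C b^m. -/
private lemma weier_key (a : ℕ) (ha : Odd a) (ha2 : 2 ≤ a) (b : ℝ) (hb0 : 0 < b) (hb1 : b < 1)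
    (hab : 1 + 3 / 2 * Real.pi < (a : ℝ) * b) (x : ℝ) (m : ℕ) :
    ∃ k : ℝ, 1 / (2 * (a : ℝ) ^ m) ≤ k ∧ k ≤ 3 / (2 * (a : ℝ) ^ m) ∧
      (1 - (3 / 2 * Real.pi) / ((a : ℝ) * b - 1)) * b ^ m ≤
        |(∑' n : ℕ, b ^ n * Real.cos ((a : ℝ) ^ n * Real.pi * (x + k))) -
         ∑' n : ℕ, b ^ n * Real.cos ((a : ℝ) ^ n * Real.pi * x)| := by
  have hπ := Real.pi_pos
  have haR : (1 : ℝ) < (a : ℝ) := by exact_mod_cast ha2.trans_lt' one_lt_two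
  have hapow : (0 : ℝ) < (a : ℝ) ^ m := by positivity
  set N : ℤ := round ((a : ℝ) ^ m * x) with hN
  set ε : ℝ := (a : ℝ) ^ m * x - N with hε
  have hεabs : |ε| ≤ 1 / 2 := abs_sub_round _
  have hε1 : -(1/2) ≤ ε ∧ ε ≤ 1/2 := abs_le.mp hεabs
  set k : ℝ := (1 - ε) / (a : ℝ) ^ m with hk
  have hk_lb : 1 / (2 * (a : ℝ) ^ m) ≤ k := by
    rw [hk, div_le_div_iff₀ (by positivity) hapow]
    nlinarith [hε1.2]
  have hk_ub : k ≤ 3 / (2 * (a : ℝ) ^ m) := by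
    rw [hk, div_le_div_iff₀ hapow (by positivity)]
    nlinarith [hε1.1]
  have hk_pos : 0 < k := lt_of_lt_of_le (by positivity) hk_lb
  refine ⟨k, hk_lb, hk_ub, ?_⟩
  -- basic identity: a^m * (x + k) = N + 1
  have hxk : (a : ℝ) ^ m * (x + k) = (N : ℝ) + 1 := by
    rw [hk]; field_simp; rw [hε]; ring
  have hx : (a : ℝ) ^ m * x = (N : ℝ) + ε := by rw [hε]; ring
  -- summability
  have hs1 : Summable (fun n => b ^ n * Real.cos ((a : ℝ) ^ n * Real.pi * (x + k))) :=
    summable_weier b hb0.le hb1 _ (fun n => Real.abs_cos_le_one _)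
  have hs2 : Summable (fun n => b ^ n * Real.cos ((a : ℝ) ^ n * Real.pi * x)) :=
    summable_weier b hb0.le hb1 _ (fun n => Real.abs_cos_le_one _)
  set G : ℕ → ℝ := fun n => b ^ n * (Real.cos ((a : ℝ) ^ n * Real.pi * (x + k))
      - Real.cos ((a : ℝ) ^ n * Real.pi * x)) with hG
  have hsG : Summable G := by
    have := hs1.sub hs2
    refine this.congr fun n => ?_
    simp only [hG]; ring
  have htsum : (∑' n : ℕ, b ^ n * Real.cos ((a : ℝ) ^ n * Real.pi * (x + k))) -
      (∑' n : ℕ, b ^ n * Real.cos ((a : ℝ) ^ n * Real.pi * x)) = ∑' n, G n := by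
    rw [← Summable.tsum_sub hs1 hs2]
    congr 1 with n
    rw [hG]; ring
  rw [htsum, ← Summable.sum_add_tsum_nat_add m hsG]
  -- head bound
  have head_bound : |∑ n ∈ Finset.range m, G n| ≤ (3 / 2 * Real.pi) / ((a : ℝ) * b - 1) * b ^ m := by
    have hab1 : (1 : ℝ) < (a : ℝ) * b := by nlinarith
    calc |∑ n ∈ Finset.range m, G n| ≤ ∑ n ∈ Finset.range m, |G n| :=
          Finset.abs_sum_le_sum_abs _ _
      _ ≤ ∑ n ∈ Finset.range m, ((a : ℝ) * b) ^ n * (Real.pi * k) := by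
          apply Finset.sum_le_sum
          intro n _
          rw [hG]
          have h1 : |b ^ n * (Real.cos ((a : ℝ) ^ n * Real.pi * (x + k))
              - Real.cos ((a : ℝ) ^ n * Real.pi * x))| = b ^ n *
              |Real.cos ((a : ℝ) ^ n * Real.pi * (x + k)) - Real.cos ((a : ℝ) ^ n * Real.pi * x)| := by
            rw [abs_mul, abs_pow, abs_of_nonneg hb0.le]
          rw [h1]
          have h2 : |Real.cos ((a : ℝ) ^ n * Real.pi * (x + k)) - Real.cos ((a : ℝ) ^ n * Real.pi * x)|
              ≤ (a : ℝ) ^ n * Real.pi * k := by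
            calc _ ≤ |(a : ℝ) ^ n * Real.pi * (x + k) - (a : ℝ) ^ n * Real.pi * x| := cos_lip _ _
              _ = (a : ℝ) ^ n * Real.pi * k := by
                  rw [show (a : ℝ) ^ n * Real.pi * (x + k) - (a : ℝ) ^ n * Real.pi * x
                    = (a : ℝ) ^ n * Real.pi * k by ring]
                  exact abs_of_nonneg (by positivity)
          calc b ^ n * |Real.cos ((a : ℝ) ^ n * Real.pi * (x + k)) - Real.cos ((a : ℝ) ^ n * Real.pi * x)|
              ≤ b ^ n * ((a : ℝ) ^ n * Real.pi * k) := by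
                exact mul_le_mul_of_nonneg_left h2 (by positivity)
            _ = ((a : ℝ) * b) ^ n * (Real.pi * k) := by rw [mul_pow]; ring
      _ = (∑ n ∈ Finset.range m, ((a : ℝ) * b) ^ n) * (Real.pi * k) := by
          rw [← Finset.sum_mul]
      _ ≤ ((a : ℝ) * b) ^ m / ((a : ℝ) * b - 1) * (Real.pi * k) := by
          apply mul_le_mul_of_nonneg_right _ (by positivity)
          rw [geom_sum_eq (ne_of_gt hab1)]
          apply div_le_div_of_nonneg_right _ (by linarith)
          · linarith [pow_pos (lt_trans one_pos hab1) m]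
          -- fix below
      _ ≤ (3 / 2 * Real.pi) / ((a : ℝ) * b - 1) * b ^ m := by
          have hk3 : Real.pi * k ≤ Real.pi * (3 / (2 * (a : ℝ) ^ m)) :=
            mul_le_mul_of_nonneg_left hk_ub hπ.le
          have habm : ((a : ℝ) * b) ^ m = (a : ℝ) ^ m * b ^ m := mul_pow _ _ _
          rw [habm]
          rw [div_mul_eq_mul_div, div_mul_eq_mul_div, div_le_div_iff₀ (by linarith) (by linarith)]
          have : (a : ℝ) ^ m * b ^ m * (Real.pi * k) ≤ (a : ℝ) ^ m * b ^ m * (Real.pi * (3 / (2 * (a : ℝ) ^ m))) := by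
            apply mul_le_mul_of_nonneg_left hk3 (by positivity)
          calc (a : ℝ) ^ m * b ^ m * (Real.pi * k) * ((a:ℝ)*b - 1)
              ≤ (a : ℝ) ^ m * b ^ m * (Real.pi * (3 / (2 * (a : ℝ) ^ m))) * ((a:ℝ)*b-1) := by
                apply mul_le_mul_of_nonneg_right this (by linarith)
            _ = 3 / 2 * Real.pi * b ^ m * ((a:ℝ)*b - 1) := by field_simp

  -- tail computation
  set θ : ℕ → ℝ := fun n => Real.pi * ((a : ℝ) ^ n * ε) with hθ
  have tail_eq : ∀ n : ℕ, G (n + m) =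
      (-Real.cos (Real.pi * N)) * (b ^ (n + m) * (1 + Real.cos (θ n))) := by
    intro n
    have hoddan : Odd ((a : ℤ) ^ n) := (Int.odd_coe_nat a |>.mpr ha).pow
    have hc : (((a : ℤ) ^ n : ℤ) : ℝ) = (a : ℝ) ^ n := by push_cast; ring
    have e1 : (a : ℝ) ^ (n + m) * Real.pi * (x + k)
        = Real.pi * ((((a : ℤ) ^ n : ℤ) : ℝ) * (((N + 1 : ℤ) : ℤ) : ℝ)) := by
      have h' : (a : ℝ) ^ (n + m) * Real.pi * (x + k)
          = (a : ℝ) ^ n * ((a : ℝ) ^ m * (x + k)) * Real.pi := by rw [pow_add]; ring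
      rw [h', hxk, hc]; push_cast; ring
    have e2 : (a : ℝ) ^ (n + m) * Real.pi * x
        = Real.pi * ((((a : ℤ) ^ n : ℤ) : ℝ) * ((N : ℤ) : ℝ)) + θ n := by
      have h' : (a : ℝ) ^ (n + m) * Real.pi * x
          = (a : ℝ) ^ n * ((a : ℝ) ^ m * x) * Real.pi := by rw [pow_add]; ring
      rw [h', hx, hc, hθ]; push_cast; ring
    have c1 : Real.cos ((a : ℝ) ^ (n + m) * Real.pi * (x + k)) = -Real.cos (Real.pi * N) := by
      rw [e1, cos_pi_odd_mul _ hoddan (N + 1)]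
      push_cast
      rw [mul_add, mul_one, Real.cos_add_pi]
    have c2 : Real.cos ((a : ℝ) ^ (n + m) * Real.pi * x)
        = Real.cos (Real.pi * N) * Real.cos (θ n) := by
      rw [e2, Real.cos_add, cos_pi_odd_mul _ hoddan N]
      have hsin : Real.sin (Real.pi * ((((a : ℤ) ^ n : ℤ) : ℝ) * ((N : ℤ) : ℝ))) = 0 := by
        have : (Real.pi * ((((a : ℤ) ^ n : ℤ) : ℝ) * ((N : ℤ) : ℝ)))
            = (((a : ℤ) ^ n * N : ℤ) : ℝ) * Real.pi := by push_cast; ring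
        rw [this, Real.sin_int_mul_pi]
      rw [hsin]
      ring
    rw [hG]
    simp only [c1, c2]
    ring
  set T : ℝ := ∑' n : ℕ, b ^ n * (1 + Real.cos (θ n)) with hT
  have hsT : Summable (fun n : ℕ => b ^ n * (1 + Real.cos (θ n))) := by
    apply Summable.of_norm_bounded (g := fun n => b ^ n * 2)
      ((summable_geometric_of_lt_one hb0.le hb1).mul_right 2)
    intro n
    rw [Real.norm_eq_abs, abs_mul, abs_pow, abs_of_nonneg hb0.le]
    apply mul_le_mul_of_nonneg_left _ (by positivity)
    rw [abs_le]
    constructor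
    · nlinarith [Real.neg_one_le_cos (θ n)]
    · nlinarith [Real.cos_le_one (θ n)]
  have hT1 : 1 ≤ T := by
    have hnn : ∀ j : ℕ, j ≠ 0 → 0 ≤ b ^ j * (1 + Real.cos (θ j)) := by
      intro j _
      have h1 := Real.neg_one_le_cos (θ j)
      have h2 : (0:ℝ) ≤ b ^ j := by positivity
      nlinarith
    have h0 : 1 + Real.cos (θ 0) ≤ T := by
      have := Summable.le_tsum hsT 0 hnn
      simpa using this
    have hcos0 : 0 ≤ Real.cos (θ 0) := by
      apply Real.cos_nonneg_of_mem_Icc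
      have : θ 0 = Real.pi * ε := by rw [hθ]; norm_num
      rw [this]
      constructor
      · nlinarith [hε1.1]
      · nlinarith [hε1.2]
    linarith
  have tail_sum : (∑' n : ℕ, G (n + m)) = (-Real.cos (Real.pi * N) * b ^ m) * T := by
    rw [hT, ← tsum_mul_left]
    apply tsum_congr
    intro n
    rw [tail_eq n, pow_add]
    ring
  have tail_abs : b ^ m ≤ |∑' n : ℕ, G (n + m)| := by
    rw [tail_sum, abs_mul, abs_mul, abs_neg, abs_cos_pi_int, abs_pow, abs_of_nonneg hb0.le]
    have hTnn : |T| = T := abs_of_nonneg (by linarith)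
    rw [hTnn, one_mul]
    nlinarith [pow_pos hb0 m]
  -- combine
  have h2 : |∑' n : ℕ, G (n + m)| - |∑ n ∈ Finset.range m, G n|
      ≤ |∑ n ∈ Finset.range m, G n + ∑' n : ℕ, G (n + m)| := by
    have h := abs_sub_abs_le_abs_sub (∑' n : ℕ, G (n + m)) (-(∑ n ∈ Finset.range m, G n))
    rw [abs_neg, sub_neg_eq_add, add_comm] at h
    exact h
  have hab1 : (1 : ℝ) < (a : ℝ) * b := by nlinarith
  calc (1 - 3 / 2 * Real.pi / ((a : ℝ) * b - 1)) * b ^ m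
      = b ^ m - 3 / 2 * Real.pi / ((a : ℝ) * b - 1) * b ^ m := by ring
    _ ≤ |∑' n : ℕ, G (n + m)| - |∑ n ∈ Finset.range m, G n| := by
        apply sub_le_sub tail_abs head_bound
    _ ≤ _ := h2

set_option maxHeartbeats 1000000 in
theorem weierstrass_nowhere_pDifferentiable (α : ℝ) (hα : 1 < α)
    (a : ℕ) (ha : Odd a) (ha0 : 0 < a) (b : ℝ) (hb0 : 0 < b) (hb1 : b < 1)
    (hab : (a : ℝ) ^ (1 / α) * b > 1 + 3 / 2 * Real.pi)
    (f : ℝ → ℝ)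
    (hf : ∀ x : ℝ, f x = ∑' n : ℕ, b ^ n * Real.cos ((a : ℝ) ^ n * Real.pi * x)) :
    ∀ x : ℝ,
      (∃ hm : ℕ → ℝ, (∀ m, 0 < hm m) ∧ Tendsto hm atTop (𝓝 0) ∧
        Tendsto (fun m => |(f (x + hm m ^ α) - f x) / hm m|) atTop atTop) ∧
      ¬ ∃ L : ℝ, Tendsto (fun h : ℝ => (f (x + h ^ α) - f x) / h)
        (𝓝[≠] (0:ℝ)) (𝓝 L) := by
  have hπ := Real.pi_pos
  have hα0 : (0:ℝ) < α := by linarith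
  have h1α : 0 < 1 / α := by positivity
  -- a ≥ 2
  have ha2 : 2 ≤ a := by
    by_contra h
    push_neg at h
    interval_cases a
    · simp [Real.one_rpow] at hab
      nlinarith
  have haR : (1:ℝ) < (a:ℝ) := by exact_mod_cast ha2.trans_lt' one_lt_two
  set A : ℝ := (a : ℝ) ^ (1 / α) with hA
  have hA1 : 1 < A := by nlinarith
  have hAle : A ≤ (a : ℝ) := by
    rw [hA]
    calc (a:ℝ) ^ (1/α) ≤ (a:ℝ) ^ (1:ℝ) := by
          apply Real.rpow_le_rpow_of_exponent_le haR.le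
          rw [div_le_one hα0]; linarith
      _ = (a : ℝ) := Real.rpow_one _
  have habR : 1 + 3 / 2 * Real.pi < (a : ℝ) * b := by nlinarith
  set C : ℝ := 1 - 3 / 2 * Real.pi / ((a : ℝ) * b - 1) with hC
  have hC0 : 0 < C := by
    have h1 : 3 / 2 * Real.pi / ((a : ℝ) * b - 1) < 1 := by
      rw [div_lt_one (by linarith)]
      linarith
    rw [hC]; linarith
  intro x
  choose K h1 h2 h3 using fun m => weier_key a ha ha2 b hb0 hb1 habR x m
  have hapow : ∀ m : ℕ, (0:ℝ) < (a:ℝ) ^ m := fun m => by positivity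
  have hKpos : ∀ m, 0 < K m := fun m =>
    lt_of_lt_of_le (by positivity) (h1 m)
  set hm : ℕ → ℝ := fun m => K m ^ (1 / α) with hhm
  have hmpos : ∀ m, 0 < hm m := fun m => Real.rpow_pos_of_pos (hKpos m) _
  have hmpow : ∀ m, hm m ^ α = K m := by
    intro m
    rw [hhm]
    rw [← Real.rpow_mul (hKpos m).le, one_div, inv_mul_cancel₀ (ne_of_gt hα0), Real.rpow_one]
  -- hm tends to 0
  have hKten : Tendsto K atTop (𝓝 0) := by
    have hGten : Tendsto (fun m : ℕ => 3 / 2 * ((a:ℝ)⁻¹) ^ m) atTop (𝓝 0) := by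
      have h0 : (a:ℝ)⁻¹ < 1 := by rw [inv_lt_one_iff₀]; right; exact haR
      have := tendsto_pow_atTop_nhds_zero_of_lt_one (by positivity : (0:ℝ) ≤ (a:ℝ)⁻¹) h0
      simpa using this.const_mul (3/2 : ℝ)
    apply squeeze_zero (fun m => (hKpos m).le) _ hGten
    intro m
    refine (h2 m).trans (le_of_eq ?_)
    rw [inv_pow]
    field_simp
  have hmten : Tendsto hm atTop (𝓝 0) := by
    have hcont : ContinuousAt (fun t : ℝ => t ^ (1/α)) 0 :=
      Real.continuousAt_rpow_const 0 (1/α) (Or.inr h1α.le)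
    have := hcont.tendsto.comp hKten
    rw [Real.zero_rpow (ne_of_gt h1α)] at this
    exact this
  -- blow-up along hm
  set c : ℝ := C / 3 ^ (1/α : ℝ) with hc
  have h3pow : (0:ℝ) < (3:ℝ) ^ (1/α : ℝ) := Real.rpow_pos_of_pos (by norm_num) _
  have hc0 : 0 < c := by positivity
  set r : ℝ := b * A with hr
  have hr1 : 1 < r := by rw [hr]; nlinarith
  have hAm : ∀ m : ℕ, ((a:ℝ) ^ m) ^ (1/α : ℝ) = A ^ m := by
    intro m
    rw [← Real.rpow_natCast (a:ℝ) m, ← Real.rpow_mul (by positivity), hA,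
      ← Real.rpow_natCast ((a:ℝ) ^ (1/α : ℝ)) m, ← Real.rpow_mul (by positivity), mul_comm]
  have hbound : ∀ m : ℕ, c * r ^ m ≤ |(f (x + hm m ^ α) - f x) / hm m| := by
    intro m
    have e0 : hm m ^ α = K m := hmpow m
    have eq1 : |(f (x + hm m ^ α) - f x) / hm m| = |f (x + K m) - f x| / hm m := by
      rw [e0, abs_div, abs_of_pos (hmpos m)]
    rw [eq1, hf (x + K m), hf x]
    have hnum : C * b ^ m ≤ |(∑' n : ℕ, b ^ n * Real.cos ((a : ℝ) ^ n * Real.pi * (x + K m))) -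
        ∑' n : ℕ, b ^ n * Real.cos ((a : ℝ) ^ n * Real.pi * x)| := h3 m
    have hub : hm m ≤ (3 / (a:ℝ) ^ m) ^ (1/α : ℝ) := by
      rw [hhm]
      apply Real.rpow_le_rpow (hKpos m).le _ h1α.le
      calc K m ≤ 3 / (2 * (a:ℝ) ^ m) := h2 m
        _ ≤ 3 / (a:ℝ) ^ m := by
            apply div_le_div_of_nonneg_left (by norm_num) (hapow m)
            nlinarith [hapow m]
    have hub2 : (3 / (a:ℝ) ^ m) ^ (1/α : ℝ) = 3 ^ (1/α : ℝ) / A ^ m := by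
      rw [Real.div_rpow (by norm_num) (hapow m).le, hAm m]
    have hAmpos : (0:ℝ) < A ^ m := by positivity
    calc c * r ^ m = C * b ^ m / (3 ^ (1/α : ℝ) / A ^ m) := by
          rw [hc, hr, mul_pow]
          field_simp
      _ ≤ C * b ^ m / hm m := by
          apply div_le_div_of_nonneg_left (by positivity) (hmpos m)
          rw [← hub2]; exact hub
      _ ≤ |(∑' n : ℕ, b ^ n * Real.cos ((a : ℝ) ^ n * Real.pi * (x + K m))) -
            ∑' n : ℕ, b ^ n * Real.cos ((a : ℝ) ^ n * Real.pi * x)| / hm m := by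
          gcongr
          exact (hmpos m).le
  have hblow : Tendsto (fun m => |(f (x + hm m ^ α) - f x) / hm m|) atTop atTop := by
    apply tendsto_atTop_mono hbound
    exact (tendsto_pow_atTop_atTop_of_one_lt hr1).const_mul_atTop hc0
  refine ⟨⟨hm, hmpos, hmten, hblow⟩, ?_⟩
  rintro ⟨L, hL⟩
  have hmem : ∀ᶠ m in atTop, hm m ∈ ({0}ᶜ : Set ℝ) :=
    Eventually.of_forall fun m => (hmpos m).ne'
  have hten' : Tendsto hm atTop (𝓝[≠] (0:ℝ)) :=
    tendsto_nhdsWithin_of_tendsto_nhds_of_eventually_within hm hmten hmem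
  have hcomp : Tendsto (fun m => (f (x + hm m ^ α) - f x) / hm m) atTop (𝓝 L) :=
    hL.comp hten'
  exact not_tendsto_nhds_of_tendsto_atTop hblow |L| hcomp.abs
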